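/- Let μ, γ > 0 and 0 < λ < 1, and let φ : [0, T̃] → ℝ solve the ODE φ' = -2μφ - γ(φ² + 1) with initial condition φ(0) = λ⁻¹, where T̃ = (1/(μr))·arctan( r(1-λ) / ( 2(λ/(1+λ))(γ/μ - 1) + 1 + λ ) ) with r = √|(γ/μ)² - 1|, in the case γ > μ. Then φ(τ) ∈ [λ, λ⁻¹] for all τ ∈ [0, T̃], and φ(T̃) = λ. -/

import Mathlib

open Real Set

set_option maxHeartbeats 1600000 in
/-- Lemma 1 (case γ > μ): the solution of φ' = -2μφ - γ(φ²+1) with φ(0) = λ⁻¹ stays in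
[λ, λ⁻¹] on [0, T̃] and reaches λ at time T̃. -/
theorem stmt0 (μ γ lam : ℝ) (hμ : 0 < μ) (hγ : 0 < γ) (hγμ : γ > μ)
    (hlam0 : 0 < lam) (hlam1 : lam < 1)
    (r : ℝ) (hr : r = Real.sqrt (|(γ / μ) ^ 2 - 1|))
    (T : ℝ)
    (hT : T = (1 / (μ * r)) *
      Real.arctan (r * (1 - lam) / (2 * (lam / (1 + lam)) * (γ / μ - 1) + 1 + lam)))
    (φ : ℝ → ℝ) (hφ0 : φ 0 = lam⁻¹)
    (hode : ∀ τ ∈ Icc (0 : ℝ) T,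
      HasDerivAt φ (-2 * μ * φ τ - γ * ((φ τ) ^ 2 + 1)) τ) :
    (∀ τ ∈ Icc (0 : ℝ) T, φ τ ∈ Icc lam lam⁻¹) ∧ φ T = lam := by
  have hγ0 : γ ≠ 0 := ne_of_gt hγ
  have hμ0 : μ ≠ 0 := ne_of_gt hμ
  obtain ⟨m, hm_def⟩ : ∃ m : ℝ, m = μ / γ := ⟨_, rfl⟩
  have hm0 : 0 < m := by rw [hm_def]; positivity
  have hm1 : m < 1 := by rw [hm_def]; exact (div_lt_one hγ).mpr hγμ
  have hγm : γ * m = μ := by rw [hm_def]; field_simp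
  obtain ⟨s, hs_def⟩ : ∃ s : ℝ, s = Real.sqrt (1 - m ^ 2) := ⟨_, rfl⟩
  have hs2 : s ^ 2 = 1 - m ^ 2 := by rw [hs_def]; exact Real.sq_sqrt (by nlinarith)
  have hs0 : 0 < s := by rw [hs_def]; exact Real.sqrt_pos.mpr (by nlinarith)
  have hgm1 : 1 < γ / μ := (one_lt_div hμ).mpr hγμ
  have hrpos : 0 < (γ / μ) ^ 2 - 1 := by nlinarith
  have hr2 : r ^ 2 = (γ / μ) ^ 2 - 1 := by
    rw [hr, Real.sq_sqrt (abs_nonneg _), abs_of_pos hrpos]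
  have hr0 : 0 < r := by
    rw [hr]; exact Real.sqrt_pos.mpr (by rwa [abs_of_pos hrpos])
  have hmg : m * (γ / μ) = 1 := by field_simp [hm_def]; linarith [hγm]
  have hsmr : s = m * r := by
    have h1 : (1 : ℝ) - m ^ 2 = (m * r) ^ 2 := by nlinarith [hr2, hmg]
    calc s = Real.sqrt ((m * r) ^ 2) := by rw [hs_def, h1]
      _ = m * r := Real.sqrt_sq (mul_nonneg hm0.le hr0.le)

  have hμrγs : μ * r = γ * s := by rw [hsmr, hm_def]; field_simp
  -- positivity of the quadratic
  have hD : ∀ x : ℝ, 0 < γ * x ^ 2 + 2 * μ * x + γ := by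
    intro x
    nlinarith [sq_nonneg (γ * x + μ), sq_nonneg (γ - μ), mul_pos hγ hγ]
  -- the antiderivative of 1/φ'
  obtain ⟨F, hF_def⟩ : ∃ F : ℝ → ℝ, F = fun x => -(1 / (γ * s)) * Real.arctan ((x + m) / s) := ⟨_, rfl⟩
  have hF' : ∀ x : ℝ, HasDerivAt F (-(γ * x ^ 2 + 2 * μ * x + γ)⁻¹) x := by
    intro x
    have h1 : HasDerivAt (fun y : ℝ => (y + m) / s) (1 / s) x := by
      simpa using ((hasDerivAt_id x).add_const m).div_const s
    have h2 := (Real.hasDerivAt_arctan ((x + m) / s)).comp x h1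
    have h3 := h2.const_mul (-(1 / (γ * s)))
    rw [hF_def]
    refine h3.congr_deriv ?_
    symm
    have hx : (0:ℝ) < γ * x ^ 2 + 2 * μ * x + γ := hD x
    have hq : (0:ℝ) < 1 + ((x + m) / s) ^ 2 := by positivity
    have e : s ^ 2 * ((x + m) / s) ^ 2 = (x + m) ^ 2 := by
      rw [← mul_pow, mul_div_assoc', mul_comm s, mul_div_assoc, div_self hs0.ne', mul_one]
    have key : γ * x ^ 2 + 2 * μ * x + γ = γ * s ^ 2 * (1 + ((x + m) / s) ^ 2) := by
      linear_combination (-γ) * hs2 + (-γ) * e + (-2 * x) * hγm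
    rw [key, mul_inv, mul_inv]
    ring
  -- positivity of T
  have hden2 : 0 < 2 * (lam / (1 + lam)) * (γ / μ - 1) + 1 + lam := by
    have h1 : 0 < lam / (1 + lam) := by positivity
    have h2 : 0 < γ / μ - 1 := by linarith
    have h3 : 0 < 2 * (lam / (1 + lam)) * (γ / μ - 1) := by positivity
    linarith
  have harg : 0 < r * (1 - lam) / (2 * (lam / (1 + lam)) * (γ / μ - 1) + 1 + lam) :=
    div_pos (mul_pos hr0 (by linarith)) hden2
  have harctanpos : 0 < Real.arctan (r * (1 - lam) / (2 * (lam / (1 + lam)) * (γ / μ - 1) + 1 + lam)) := by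
    have := Real.arctan_strictMono harg
    simpa using this
  have hTpos : 0 < T := by
    rw [hT]; exact mul_pos (by positivity) harctanpos
  -- F ∘ φ − id is constant on [0, T]
  have hcont : ContinuousOn (fun τ => F (φ τ) - τ) (Icc (0:ℝ) T) := by
    intro τ hτ
    exact (((hF' (φ τ)).comp τ (hode τ hτ)).sub (hasDerivAt_id τ)).continuousAt.continuousWithinAt
  have hderiv0 : ∀ τ ∈ Ico (0:ℝ) T, HasDerivWithinAt (fun τ => F (φ τ) - τ) 0 (Ici τ) τ := by
    intro τ hτ
    have h := ((hF' (φ τ)).comp τ (hode τ (Ico_subset_Icc_self hτ))).sub (hasDerivAt_id τ)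
    have hval : -(γ * (φ τ) ^ 2 + 2 * μ * (φ τ) + γ)⁻¹ * (-2 * μ * φ τ - γ * ((φ τ) ^ 2 + 1)) - 1 = 0 := by
      have hx := hD (φ τ)
      have hx' := ne_of_gt hx
      have he : (-2 * μ * φ τ - γ * ((φ τ) ^ 2 + 1)) = -(γ * (φ τ) ^ 2 + 2 * μ * (φ τ) + γ) := by ring
      rw [he, neg_mul_neg, inv_mul_cancel₀ hx']
      ring
    rw [hval] at h
    exact h.hasDerivWithinAt
  have hg := constant_of_has_deriv_right_zero hcont hderiv0
  -- key arctan computation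
  have hli : lam⁻¹ * lam = 1 := inv_mul_cancel₀ (ne_of_gt hlam0)
  have hil : 0 < lam⁻¹ := by positivity
  have hab1 : (0:ℝ) < 1 + ((lam⁻¹ + m) / s) * ((lam + m) / s) := by positivity
  have hsub : Real.arctan ((lam⁻¹ + m) / s) - Real.arctan ((lam + m) / s)
      = Real.arctan ((((lam⁻¹ + m) / s) - ((lam + m) / s)) / (1 + ((lam⁻¹ + m) / s) * ((lam + m) / s))) := by
    have hprod : (0:ℝ) < ((lam⁻¹ + m) / s) * ((lam + m) / s) :=
      mul_pos (div_pos (by positivity) hs0) (div_pos (by positivity) hs0)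
    have hlt : ((lam⁻¹ + m) / s) * -((lam + m) / s) < 1 := by
      have he : ((lam⁻¹ + m) / s) * -((lam + m) / s)
          = -(((lam⁻¹ + m) / s) * ((lam + m) / s)) := by ring
      rw [he]; linarith
    have h := Real.arctan_add (x := (lam⁻¹ + m) / s) (y := -((lam + m) / s)) hlt
    rw [Real.arctan_neg, ← sub_eq_add_neg] at h
    rw [h]
    congr 1
    ring_nf
  have hargs : (((lam⁻¹ + m) / s) - ((lam + m) / s)) / (1 + ((lam⁻¹ + m) / s) * ((lam + m) / s))
      = r * (1 - lam) / (2 * (lam / (1 + lam)) * (γ / μ - 1) + 1 + lam) := by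
    rw [div_eq_div_iff (ne_of_gt hab1) (ne_of_gt hden2), hsmr, hm_def]
    have hlam0' : lam ≠ 0 := ne_of_gt hlam0
    have hlam1' : (1:ℝ) + lam ≠ 0 := by positivity
    have hr0' : r ≠ 0 := ne_of_gt hr0
    have hr2' : μ ^ 2 * r ^ 2 = γ ^ 2 - μ ^ 2 := by
      have h := hr2
      field_simp at h
      linarith
    field_simp
    ring_nf
    linear_combination (lam ^ 3 - lam) * hr2'
  have hkey : F lam⁻¹ + T = F lam := by
    have hμrγs' : (1 : ℝ) / (μ * r) = 1 / (γ * s) := by rw [hμrγs]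
    rw [hF_def]
    simp only
    rw [hT, hμrγs', ← hargs, ← hsub]
    ring
  -- conclude φ T = lam
  have hFanti : StrictAnti F := by
    apply strictAnti_of_deriv_neg
    intro x
    rw [(hF' x).deriv]
    simpa using inv_pos.mpr (hD x)
  have hφT : φ T = lam := by
    have h1 := hg T ⟨hTpos.le, le_refl T⟩
    rw [hφ0] at h1
    have h2 : F (φ T) = F lam := by linarith [hkey]
    exact hFanti.injective h2
  -- monotonicity
  have hanti : AntitoneOn φ (Icc 0 T) := by
    apply antitoneOn_of_deriv_nonpos (convex_Icc 0 T)
    · intro τ hτ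
      exact (hode τ hτ).continuousAt.continuousWithinAt
    · intro τ hτ
      exact (hode τ (interior_subset hτ)).differentiableAt.differentiableWithinAt
    · intro τ hτ
      rw [(hode τ (interior_subset hτ)).deriv]
      nlinarith [hD (φ τ)]
  refine ⟨fun τ hτ => ?_, hφT⟩
  have h0mem : (0:ℝ) ∈ Icc (0:ℝ) T := ⟨le_refl 0, hTpos.le⟩
  have hTmem : T ∈ Icc (0:ℝ) T := ⟨hTpos.le, le_refl T⟩
  constructor
  · have := hanti hτ hTmem hτ.2
    rwa [hφT] at this
  · have := hanti h0mem hτ hτ.1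
    rwa [hφ0] at this
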